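/- Let E be a real inner product space, let K : E →L[ℝ] E be a continuous linear operator that is skew-symmetric, i.e. ⟪K v, w⟫ = −⟪v, K w⟫ for all v, w ∈ E, let f : E → ℝ be twice continuously (Fréchet) differentiable with differentiable gradient g : E → E (i.e. (fderiv f m) v = ⟪g m, v⟫ for all m, v), and define the vector field X : E → E by X m = K (g m). Then for every m ∈ E the operator (fderiv X m) ∘ K is symmetric: for all v, w ∈ E, ⟪(fderiv X m) (K v), w⟫ = ⟪v, (fderiv X m) (K w)⟫. -/
import Mathlib

open RealInnerProductSpace

/-- A necessary condition for a vector field `X = K ∘ grad f` (with `K` a constant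
skew-symmetric continuous linear operator) to be Hamiltonian is the symmetry of
`dX(m) ∘ K` at every point `m`. -/
theorem fderiv_comp_skew_symmetric
    {E : Type*} [NormedAddCommGroup E] [InnerProductSpace ℝ E]
    (K : E →L[ℝ] E) (hK : ∀ v w : E, ⟪K v, w⟫ = -⟪v, K w⟫)
    (f : E → ℝ) (g : E → E)
    (hf : ContDiff ℝ 2 f) (hg : Differentiable ℝ g)
    (hgrad : ∀ m v : E, fderiv ℝ f m v = ⟪g m, v⟫)
    (X : E → E) (hX : ∀ m : E, X m = K (g m)) :
    ∀ m v w : E, ⟪fderiv ℝ X m (K v), w⟫ = ⟪v, fderiv ℝ X m (K w)⟫ := by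
  intro m v w
  -- f' is the derivative of f
  have hfd : Differentiable ℝ f := hf.differentiable (by norm_num)
  have hf' : ∀ x : E, HasFDerivAt f ((innerSL ℝ) (g x)) x := by
    intro x
    have := (hfd x).hasFDerivAt
    convert this using 1
    ext u
    simp [hgrad]
  -- derivative of f' at m
  have hf'' : HasFDerivAt (fun x => (innerSL ℝ) (g x))
      ((innerSL ℝ).comp (fderiv ℝ g m)) m :=
    (innerSL ℝ).hasFDerivAt.comp m (hg m).hasFDerivAt
  have hsymm : ∀ a b : E, ⟪fderiv ℝ g m a, b⟫ = ⟪fderiv ℝ g m b, a⟫ := by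
    intro a b
    have := second_derivative_symmetric hf' hf'' a b
    simpa using this
  -- fderiv of X
  have hXd : fderiv ℝ X m = K.comp (fderiv ℝ g m) := by
    have : X = fun x => K (g x) := funext hX
    rw [this]
    exact (K.hasFDerivAt.comp m (hg m).hasFDerivAt).fderiv
  rw [hXd]
  simp only [ContinuousLinearMap.coe_comp', Function.comp_apply]
  rw [hK, hsymm (K v) (K w), ← hK, real_inner_comm]
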